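/- Let n > 3 and S = {f, rf, r³f} in D_n. Then S generates D_n and λ₁(D_n, S) ≤ ⌊n/2⌋ + 1. -/

import Mathlib

open DihedralGroup

/-- The word length of `g` with respect to a generating set `S`: the minimal
number of letters of `S` needed to write `g` as a product. -/
noncomputable def wordLength {G : Type*} [Group G] (S : Set G) (g : G) : ℕ :=
  sInf {k | ∃ l : List G, (∀ x ∈ l, x ∈ S) ∧ l.prod = g ∧ l.length = k}

lemma wordLength_le {G : Type*} [Group G] (S : Set G) (g : G) (l : List G)
    (h1 : ∀ x ∈ l, x ∈ S) (h2 : l.prod = g) : wordLength S g ≤ l.length :=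
  Nat.sInf_le ⟨l, h1, h2, rfl⟩

/-- A word of reflections whose product is `r (-k)`. -/
def Lneg (n : ℕ) : ℕ → List (DihedralGroup n)
  | 0 => []
  | 1 => [sr 0, sr (-1)]
  | 2 => [sr (-1), sr (-3)]
  | (k+3) => sr 0 :: sr (-3) :: Lneg n k

/-- A word of reflections whose product is `r k`. -/
def Lpos (n : ℕ) : ℕ → List (DihedralGroup n)
  | 0 => []
  | 1 => [sr (-1), sr 0]
  | 2 => [sr (-3), sr (-1)]
  | (k+3) => sr (-3) :: sr 0 :: Lpos n k

lemma Lneg_prod (n : ℕ) : ∀ k, (Lneg n k).prod = r (-(k : ZMod n))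
  | 0 => by simp [Lneg, one_def, -r_zero]
  | 1 => by norm_num [Lneg]
  | 2 => by norm_num [Lneg]
  | (k+3) => by
      simp only [Lneg, List.prod_cons, Lneg_prod n k, sr_mul_r, sr_mul_sr, r_mul_r]
      congr 1
      push_cast
      ring

lemma Lpos_prod (n : ℕ) : ∀ k, (Lpos n k).prod = r (k : ZMod n)
  | 0 => by simp [Lpos, one_def, -r_zero]
  | 1 => by norm_num [Lpos]
  | 2 => by norm_num [Lpos]
  | (k+3) => by
      simp only [Lpos, List.prod_cons, Lpos_prod n k, sr_mul_r, sr_mul_sr, r_mul_r]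
      congr 1
      push_cast
      ring

lemma Lneg_length (n : ℕ) : ∀ k, (Lneg n k).length = 2 * ((k+2)/3)
  | 0 => by simp [Lneg]
  | 1 => by simp [Lneg]
  | 2 => by simp [Lneg]
  | (k+3) => by
      simp only [Lneg, List.length_cons, Lneg_length n k]
      omega

lemma Lpos_length (n : ℕ) : ∀ k, (Lpos n k).length = 2 * ((k+2)/3)
  | 0 => by simp [Lpos]
  | 1 => by simp [Lpos]
  | 2 => by simp [Lpos]
  | (k+3) => by
      simp only [Lpos, List.length_cons, Lpos_length n k]
      omega

lemma Lneg_mem (n : ℕ) :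
    ∀ k, ∀ x ∈ Lneg n k, x ∈ ({sr 0, sr (-1), sr (-3)} : Set (DihedralGroup n))
  | 0 => by simp [Lneg]
  | 1 => by simp [Lneg]
  | 2 => by simp [Lneg]
  | (k+3) => by
      intro x hx
      simp only [Lneg, List.mem_cons] at hx
      rcases hx with h | h | h
      · exact Or.inl h
      · exact Or.inr (Or.inr h)
      · exact Lneg_mem n k x h

lemma Lpos_mem (n : ℕ) :
    ∀ k, ∀ x ∈ Lpos n k, x ∈ ({sr 0, sr (-1), sr (-3)} : Set (DihedralGroup n))
  | 0 => by simp [Lpos]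
  | 1 => by simp [Lpos]
  | 2 => by simp [Lpos]
  | (k+3) => by
      intro x hx
      simp only [Lpos, List.mem_cons] at hx
      rcases hx with h | h | h
      · exact Or.inr (Or.inr h)
      · exact Or.inl h
      · exact Lpos_mem n k x h

lemma set_eq (n : ℕ) :
    ({sr 0, r 1 * sr 0, (r 1 : DihedralGroup n) ^ 3 * sr 0} : Set (DihedralGroup n))
      = {sr 0, sr (-1), sr (-3)} := by
  have h1 : (r 1 : DihedralGroup n) * sr 0 = sr (-1) := by
    rw [r_mul_sr]; ring_nf
  have h2 : (r 1 : DihedralGroup n) ^ 3 * sr 0 = sr (-3) := by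
    rw [r_one_pow, r_mul_sr]
    push_cast
    ring_nf
  rw [h1, h2]

lemma key (n : ℕ) (hn : 3 < n) (m : ZMod n) :
    wordLength ({sr 0, r 1 * sr 0, (r 1 : DihedralGroup n) ^ 3 * sr 0} : Set (DihedralGroup n))
      (sr m) ≤ n / 2 + 1 := by
  haveI : NeZero n := ⟨by omega⟩
  rw [set_eq]
  have hmv : ((m.val : ℕ) : ZMod n) = m := ZMod.natCast_zmod_val m
  have hlt : m.val < n := ZMod.val_lt m
  by_cases hk : m.val ≤ n / 2
  · -- use Lneg (m.val) ++ [sr 0]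
    have hp : (Lneg n m.val ++ [sr 0]).prod = sr m := by
      rw [List.prod_append, Lneg_prod, List.prod_singleton, r_mul_sr, hmv]
      ring_nf
    have := wordLength_le _ _ _ (fun x hx => by
      rcases List.mem_append.mp hx with h | h
      · exact Lneg_mem n _ x h
      · simp at h; subst h; exact Or.inl rfl) hp
    refine this.trans ?_
    rw [List.length_append, Lneg_length]
    simp only [List.length_singleton]
    omega
  · -- use Lpos (n - m.val) ++ [sr 0]
    have hsub : (((n - m.val : ℕ)) : ZMod n) = -m := by
      push_cast [Nat.cast_sub hlt.le, hmv]
      simp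
    have hp : (Lpos n (n - m.val) ++ [sr 0]).prod = sr m := by
      rw [List.prod_append, Lpos_prod, List.prod_singleton, r_mul_sr, hsub]
      ring_nf
    have := wordLength_le _ _ _ (fun x hx => by
      rcases List.mem_append.mp hx with h | h
      · exact Lpos_mem n _ x h
      · simp at h; subst h; exact Or.inl rfl) hp
    refine this.trans ?_
    rw [List.length_append, Lpos_length]
    simp only [List.length_singleton]
    omega

theorem stmt18 (n : ℕ) (hn : 3 < n) :
    letI S : Set (DihedralGroup n) :=
      {sr 0, r 1 * sr 0, (r 1 : DihedralGroup n) ^ 3 * sr 0}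
    Subgroup.closure S = ⊤ ∧
      ∀ g : DihedralGroup n, ∀ s ∈ S, wordLength S (g * s * g⁻¹) ≤ n / 2 + 1 := by
  haveI : NeZero n := ⟨by omega⟩
  refine ⟨?_, ?_⟩
  · rw [eq_top_iff]
    rintro (i | i) -
    · -- r i
      have hsr0 : (sr 0 : DihedralGroup n) ∈ Subgroup.closure
          ({sr 0, r 1 * sr 0, (r 1 : DihedralGroup n) ^ 3 * sr 0} : Set (DihedralGroup n)) :=
        Subgroup.subset_closure (Or.inl rfl)
      have hsr1 : (r 1 * sr 0 : DihedralGroup n) ∈ Subgroup.closure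
          ({sr 0, r 1 * sr 0, (r 1 : DihedralGroup n) ^ 3 * sr 0} : Set (DihedralGroup n)) :=
        Subgroup.subset_closure (Or.inr (Or.inl rfl))
      have hr1 : (r 1 : DihedralGroup n) ∈ Subgroup.closure
          ({sr 0, r 1 * sr 0, (r 1 : DihedralGroup n) ^ 3 * sr 0} : Set (DihedralGroup n)) := by
        have h := mul_mem hsr1 hsr0
        rwa [mul_assoc, sr_mul_self, mul_one] at h
      have : (r i : DihedralGroup n) = (r 1) ^ i.val := by
        rw [r_one_pow, ZMod.natCast_zmod_val]
      rw [this]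
      exact pow_mem hr1 _
    · -- sr i
      have hsr0 : (sr 0 : DihedralGroup n) ∈ Subgroup.closure
          ({sr 0, r 1 * sr 0, (r 1 : DihedralGroup n) ^ 3 * sr 0} : Set (DihedralGroup n)) :=
        Subgroup.subset_closure (Or.inl rfl)
      have hsr1 : (r 1 * sr 0 : DihedralGroup n) ∈ Subgroup.closure
          ({sr 0, r 1 * sr 0, (r 1 : DihedralGroup n) ^ 3 * sr 0} : Set (DihedralGroup n)) :=
        Subgroup.subset_closure (Or.inr (Or.inl rfl))
      have hr1 : (r 1 : DihedralGroup n) ∈ Subgroup.closure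
          ({sr 0, r 1 * sr 0, (r 1 : DihedralGroup n) ^ 3 * sr 0} : Set (DihedralGroup n)) := by
        have h := mul_mem hsr1 hsr0
        rwa [mul_assoc, sr_mul_self, mul_one] at h
      have hri : (r i : DihedralGroup n) ∈ Subgroup.closure
          ({sr 0, r 1 * sr 0, (r 1 : DihedralGroup n) ^ 3 * sr 0} : Set (DihedralGroup n)) := by
        have : (r i : DihedralGroup n) = (r 1) ^ i.val := by
          rw [r_one_pow, ZMod.natCast_zmod_val]
        rw [this]
        exact pow_mem hr1 _
      have : (sr i : DihedralGroup n) = sr 0 * r i := by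
        rw [sr_mul_r, zero_add]
      rw [this]
      exact mul_mem hsr0 hri
  · intro g s hs
    have hj : ∃ j, s = sr j := by
      rcases hs with h | h | h
      · exact ⟨0, h⟩
      · exact ⟨-1, by rw [h, r_mul_sr]; ring_nf⟩
      · refine ⟨-3, ?_⟩
        rw [h, r_one_pow, r_mul_sr]
        push_cast
        ring_nf
    obtain ⟨j, rfl⟩ := hj
    rcases g with i | i
    · have hinv : (r i : DihedralGroup n)⁻¹ = r (-i) := rfl
      have : r i * sr j * (r i)⁻¹ = sr (j - i + -i) := by
        rw [hinv, r_mul_sr, sr_mul_r]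
      rw [this]
      exact key n hn _
    · have hinv : (sr i : DihedralGroup n)⁻¹ = sr i := rfl
      have : sr i * sr j * (sr i)⁻¹ = sr (i - (j - i)) := by
        rw [hinv, sr_mul_sr, r_mul_sr]
      rw [this]
      exact key n hn _
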